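/- arXiv:2112.06229 — 2 statements merged into one kernel-verified Lean document; each statement's English description precedes it below -/
import Mathlib

section
/- Let A = ∂ₓₓ + 1 on [0,π] with Dirichlet conditions, B(u,v) = ½ ∂ₓ(uv), P_c the orthogonal projection onto span{sin x}, P_s = I − P_c, and A_s the restriction of A to the range of P_s (which is invertible there). Define F(u,v,w) = −P_c B(u, A_s^{-1} P_s B(v,w)) for u,v,w in span{sin x}. Then F(u₁ sin x, u₂ sin x, u₃ sin x) = −(1/24) u₁u₂u₃ sin x for all real u₁,u₂,u₃. -/
open Real

/-- The bilinear map `B(u,v) = ½ u ∂ₓ v + ½ v ∂ₓ u = ½ ∂ₓ(uv)`. -/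
noncomputable def Bq (u v : ℝ → ℝ) (x : ℝ) : ℝ :=
  (1 / 2) * u x * deriv v x + (1 / 2) * v x * deriv u x

/-- with `A = ∂ₓₓ + 1`, `P_c` the projection onto `span{sin x}`
(`P_c f = (2/π)⟨f, sin⟩ sin`), and `h = A_s⁻¹ P_s B(u₂ sin, u₃ sin)` (characterized by
`h'' + h = P_s B(u₂ sin, u₃ sin)`, `⟨h, sin⟩ = 0`, Dirichlet boundary conditions),
the map `F(u,v,w) = −P_c B(u, A_s⁻¹ P_s B(v,w))` satisfies
`F(u₁ sin x, u₂ sin x, u₃ sin x) = −(1/24) u₁u₂u₃ sin x`. -/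
theorem stmt4 (u₁ u₂ u₃ : ℝ) (h : ℝ → ℝ)
    (hreg : ContDiff ℝ 2 h)
    (hbc0 : h 0 = 0) (hbcπ : h Real.pi = 0)
    (heq : ∀ x, deriv (deriv h) x + h x =
      Bq (fun y => u₂ * Real.sin y) (fun y => u₃ * Real.sin y) x -
        ((2 / Real.pi) * ∫ t in (0:ℝ)..Real.pi,
          Bq (fun y => u₂ * Real.sin y) (fun y => u₃ * Real.sin y) t * Real.sin t) * Real.sin x)
    (horth : (∫ x in (0:ℝ)..Real.pi, h x * Real.sin x) = 0) :
    ∀ x : ℝ,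
      -(((2 / Real.pi) * ∫ t in (0:ℝ)..Real.pi,
          Bq (fun y => u₁ * Real.sin y) h t * Real.sin t) * Real.sin x)
        = -(1 / 24) * (u₁ * u₂ * u₃) * Real.sin x := by
  -- derivative of c * sin
  have hds : ∀ (c : ℝ) (x : ℝ), deriv (fun y => c * Real.sin y) x = c * Real.cos x := by
    intro c x
    rw [deriv_const_mul _ (Real.differentiable_sin x), Real.deriv_sin]
  -- Bq of two sines
  have hB : ∀ x, Bq (fun y => u₂ * Real.sin y) (fun y => u₃ * Real.sin y) x
      = u₂ * u₃ * (Real.sin x * Real.cos x) := by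
    intro x; simp only [Bq, hds]; ring
  -- basic integrals
  have int1 : (∫ t in (0:ℝ)..π, sin t ^ 2 * cos t) = 0 := by
    have hd : ∀ t ∈ Set.uIcc (0:ℝ) π, HasDerivAt (fun y => sin y ^ 3 / 3) (sin t ^ 2 * cos t) t := by
      intro t _
      have := ((Real.hasDerivAt_sin t).pow 3).div_const 3
      refine this.congr_deriv ?_; norm_num; ring
    rw [intervalIntegral.integral_eq_sub_of_hasDerivAt hd
      (by apply Continuous.intervalIntegrable; continuity)]
    simp
  have int2 : (∫ t in (0:ℝ)..π, sin (2*t) ^ 2) = π / 2 := by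
    have hd : ∀ t ∈ Set.uIcc (0:ℝ) π, HasDerivAt (fun y => y/2 - sin (4*y) / 8) (sin (2*t) ^ 2) t := by
      intro t _
      have h4 : HasDerivAt (fun y : ℝ => 4*y) 4 t := by
        simpa using (hasDerivAt_id t).const_mul (4:ℝ)
      have h2 := ((hasDerivAt_id t).div_const 2).sub
        (((Real.hasDerivAt_sin (4*t)).comp t h4).div_const 8)
      refine h2.congr_deriv ?_
      rw [show (4:ℝ)*t = 2*(2*t) by ring, Real.cos_two_mul, Real.cos_sq']
      ring
    rw [intervalIntegral.integral_eq_sub_of_hasDerivAt hd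
      (by apply Continuous.intervalIntegrable; continuity)]
    have h4π : Real.sin (4*π) = 0 := by simpa using Real.sin_nat_mul_pi 4
    simp [h4π]
  -- the projection coefficient in heq is zero
  have hK : (∫ t in (0:ℝ)..Real.pi, Bq (fun y => u₂ * Real.sin y) (fun y => u₃ * Real.sin y) t
      * Real.sin t) = 0 := by
    have : ∀ t, Bq (fun y => u₂ * Real.sin y) (fun y => u₃ * Real.sin y) t * Real.sin t
        = (u₂ * u₃) * (sin t ^ 2 * cos t) := by intro t; rw [hB]; ring
    simp_rw [this]
    rw [intervalIntegral.integral_const_mul, int1, mul_zero]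
  have heq' : ∀ x, deriv (deriv h) x + h x = u₂ * u₃ * (Real.sin x * Real.cos x) := by
    intro x; rw [heq x, hK, hB]; ring
  -- regularity facts
  have hd1 : ∀ x, HasDerivAt h (deriv h x) x := fun x =>
    ((hreg.differentiable (by norm_num)) x).hasDerivAt
  have hcd1 : ContDiff ℝ 1 (deriv h) := by
    have := ContDiff.iterate_deriv' 1 1 (by exact_mod_cast hreg)
    simpa using this
  have hdiff' : Differentiable ℝ (deriv h) := hcd1.differentiable (by norm_num)
  have hd2 : ∀ x, HasDerivAt (deriv h) (deriv (deriv h) x) x := fun x => (hdiff' x).hasDerivAt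
  have hc : Continuous h := hreg.continuous
  have hc' : Continuous (deriv h) := hdiff'.continuous
  have hc'' : Continuous (deriv (deriv h)) := hcd1.continuous_deriv le_rfl
  -- derivative helpers for the trig weights
  have h2t : ∀ t : ℝ, HasDerivAt (fun y : ℝ => 2*y) 2 t := by
    intro t; simpa using (hasDerivAt_id t).const_mul (2:ℝ)
  have hds2 : ∀ t : ℝ, HasDerivAt (fun y => Real.sin (2*y)) (2 * Real.cos (2*t)) t := by
    intro t
    have := (Real.hasDerivAt_sin (2*t)).comp t (h2t t)
    simpa [Function.comp_def, mul_comm] using this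
  have hdc2 : ∀ t : ℝ, HasDerivAt (fun y => Real.cos (2*y)) (-(2 * Real.sin (2*t))) t := by
    intro t
    have := (Real.hasDerivAt_cos (2*t)).comp t (h2t t)
    have h2 : -Real.sin (2*t) * 2 = -(2 * Real.sin (2*t)) := by ring
    rw [← h2]
    simpa [Function.comp_def] using this
  have hdsq : ∀ t : ℝ, HasDerivAt (fun y => Real.sin y ^ 2) (Real.sin (2*t)) t := by
    intro t
    have := (Real.hasDerivAt_sin t).pow 2
    refine this.congr_deriv ?_
    rw [Real.sin_two_mul]; norm_num
  -- continuity helpers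
  have hcs2 : Continuous (fun t : ℝ => Real.sin (2*t)) :=
    Real.continuous_sin.comp (continuous_const.mul continuous_id)
  have hcc2 : Continuous (fun t : ℝ => Real.cos (2*t)) :=
    Real.continuous_cos.comp (continuous_const.mul continuous_id)
  set J := ∫ t in (0:ℝ)..π, Real.sin (2*t) * h t with hJdef
  -- integration by parts
  have ibp2 : (∫ t in (0:ℝ)..π, Real.cos (2*t) * deriv h t) = 2 * J := by
    rw [intervalIntegral.integral_mul_deriv_eq_deriv_mul
      (fun t _ => hdc2 t) (fun t _ => hd1 t)
      (((continuous_const.mul hcs2).neg).intervalIntegrable _ _)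
      (hc'.intervalIntegrable _ _)]
    rw [hbc0, hbcπ]
    have e : (∫ x in (0:ℝ)..π, -(2 * Real.sin (2*x)) * h x) = (-2) * J := by
      have ept : ∀ x : ℝ, -(2 * Real.sin (2*x)) * h x = (-2) * (Real.sin (2*x) * h x) :=
        fun x => by ring
      simp_rw [ept]
      rw [intervalIntegral.integral_const_mul]
    rw [e]; ring
  have ibp1 : (∫ t in (0:ℝ)..π, Real.sin (2*t) * deriv (deriv h) t) = -(4 * J) := by
    rw [intervalIntegral.integral_mul_deriv_eq_deriv_mul
      (fun t _ => hds2 t) (fun t _ => hd2 t)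
      ((continuous_const.mul hcc2).intervalIntegrable _ _)
      (hc''.intervalIntegrable _ _)]
    have e : (∫ t in (0:ℝ)..π, 2 * Real.cos (2*t) * deriv h t)
        = 2 * ∫ t in (0:ℝ)..π, Real.cos (2*t) * deriv h t := by
      rw [← intervalIntegral.integral_const_mul]
      congr 1; ext t; ring
    rw [e, ibp2]
    have hs2π : Real.sin (2*π) = 0 := by simpa using Real.sin_nat_mul_pi 2
    rw [hs2π]
    simp; ring
  have ibp3 : (∫ t in (0:ℝ)..π, Real.sin t ^ 2 * deriv h t) = -J := by
    rw [intervalIntegral.integral_mul_deriv_eq_deriv_mul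
      (fun t _ => hdsq t) (fun t _ => hd1 t)
      (hcs2.intervalIntegrable _ _)
      (hc'.intervalIntegrable _ _)]
    rw [hbc0, hbcπ]
    simp
    exact hJdef.symm
  -- value of J from the ODE
  have hJval : J = -(u₂ * u₃) * π / 12 := by
    have split : (∫ t in (0:ℝ)..π,
        (Real.sin (2*t) * deriv (deriv h) t + Real.sin (2*t) * h t))
        = (∫ t in (0:ℝ)..π, Real.sin (2*t) * deriv (deriv h) t) + J := by
      rw [hJdef]
      exact intervalIntegral.integral_add
        ((hcs2.mul hc'').intervalIntegrable _ _)
        ((hcs2.mul hc).intervalIntegrable _ _)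
    have rhs : (∫ t in (0:ℝ)..π,
        (Real.sin (2*t) * deriv (deriv h) t + Real.sin (2*t) * h t))
        = u₂ * u₃ / 2 * (π / 2) := by
      have hpt : ∀ t, Real.sin (2*t) * deriv (deriv h) t + Real.sin (2*t) * h t
          = (u₂ * u₃ / 2) * Real.sin (2*t) ^ 2 := by
        intro t
        have e : Real.sin (2*t) * deriv (deriv h) t + Real.sin (2*t) * h t
            = Real.sin (2*t) * (deriv (deriv h) t + h t) := by ring
        rw [e, heq' t, Real.sin_two_mul]; ring
      simp_rw [hpt]
      rw [intervalIntegral.integral_const_mul, int2]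
    rw [split, ibp1] at rhs
    linarith
  -- the goal integral
  have hGpt : ∀ t, Bq (fun y => u₁ * Real.sin y) h t * Real.sin t
      = (u₁/2) * (Real.sin t ^ 2 * deriv h t) + (u₁/4) * (Real.sin (2*t) * h t) := by
    intro t
    simp only [Bq, hds, Real.sin_two_mul]
    ring
  have hG : (∫ t in (0:ℝ)..π, Bq (fun y => u₁ * Real.sin y) h t * Real.sin t)
      = u₁ * u₂ * u₃ * π / 48 := by
    simp_rw [hGpt]
    rw [intervalIntegral.integral_add (f := fun t => (u₁/2) * (Real.sin t ^ 2 * deriv h t))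
      (g := fun t => (u₁/4) * (Real.sin (2*t) * h t))
      ((continuous_const.mul ((Real.continuous_sin.pow 2).mul hc')).intervalIntegrable _ _)
      ((continuous_const.mul (hcs2.mul hc)).intervalIntegrable _ _),
      intervalIntegral.integral_const_mul, intervalIntegral.integral_const_mul,
      ibp3, ← hJdef, hJval]
    ring
  intro x
  rw [hG]
  have hπ : (π : ℝ) ≠ 0 := Real.pi_ne_zero
  field_simp
  ring
end

section
/- Let Ẑ_k be the stationary Ornstein–Uhlenbeck process Ẑ_k(T) = e^{-λ_k ε^{-2} T} Ẑ_k(0) + ε^{-1}α_k ∫₀^T e^{-λ_k ε^{-2}(T−s)} dβ̃_k(s), where Ẑ_k(0) ∼ N(0, α_k²/(2λ_k)) is independent of β̃_k. Then for every 0 ≤ s < T and every p ≥ 1 there exists C > 0 (depending on p, α_k, λ_k but not on ε) such that E |∫_s^T Ẑ_k(r) dr|^{2p} ≤ C (T−s)^p ε^{2p}. -/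
open MeasureTheory ProbabilityTheory Filter Topology intervalIntegral

lemma stmt9_pow_le_exp (k : ℕ) {y : ℝ} (hy : 0 ≤ y) : y ^ k ≤ k.factorial * Real.exp y := by
  have h1 : y ^ k / k.factorial ≤ Real.exp y := by
    refine le_trans ?_ (Real.sum_le_exp_of_nonneg hy (k+1))
    exact Finset.single_le_sum (f := fun i => y ^ i / i.factorial)
      (fun i _ => by positivity) (Finset.self_mem_range_succ k)
  have hk : (0:ℝ) < k.factorial := by positivity
  calc y ^ k = (y ^ k / k.factorial) * k.factorial := by field_simp
    _ ≤ Real.exp y * k.factorial := by gcongr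
    _ = k.factorial * Real.exp y := mul_comm _ _

lemma stmt9_integrable_abs_pow_std (k : ℕ) :
    Integrable (fun x : ℝ => |x| ^ k) (gaussianReal 0 1) := by
  rw [gaussianReal_of_var_ne_zero 0 one_ne_zero]
  rw [integrable_withDensity_iff (measurable_gaussianPDF 0 1)
    (Eventually.of_forall fun x => ENNReal.ofReal_lt_top)]
  have hbound : ∀ x : ℝ, ‖|x| ^ k * (gaussianPDF 0 1 x).toReal‖ ≤
      ((Real.sqrt (2 * Real.pi * 1))⁻¹ * (k.factorial * Real.exp 1)) * Real.exp (-(1/4) * x ^ 2) := by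
    intro x
    have hpdf : (gaussianPDF 0 1 x).toReal = gaussianPDFReal 0 1 x :=
      ENNReal.toReal_ofReal (gaussianPDFReal_nonneg 0 1 x)
    rw [Real.norm_eq_abs, abs_of_nonneg (by positivity : (0:ℝ) ≤ |x| ^ k * _), hpdf,
      gaussianPDFReal]
    have key : |x| ^ k * Real.exp (-(x - 0) ^ 2 / (2 * 1)) ≤
        (k.factorial * Real.exp 1) * Real.exp (-(1/4) * x ^ 2) := by
      have h2 : |x| ≤ 1 + x ^ 2 / 4 := by nlinarith [sq_nonneg (|x| - 2), sq_abs x]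
      calc |x| ^ k * Real.exp (-(x - 0) ^ 2 / (2 * 1))
          ≤ (k.factorial * Real.exp |x|) * Real.exp (-(x - 0) ^ 2 / (2 * 1)) := by
            gcongr; exact stmt9_pow_le_exp k (abs_nonneg x)
        _ = k.factorial * Real.exp (|x| + -(x - 0) ^ 2 / (2 * 1)) := by
            rw [Real.exp_add]; ring
        _ ≤ k.factorial * Real.exp (1 + -(1/4) * x ^ 2) :=
            mul_le_mul_of_nonneg_left
              (by rw [Real.exp_le_exp]; nlinarith [sq_abs x]) (Nat.cast_nonneg _)
        _ = (k.factorial * Real.exp 1) * Real.exp (-(1/4) * x ^ 2) := by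
            rw [Real.exp_add]; ring
    have hc : (0:ℝ) ≤ (Real.sqrt (2 * Real.pi * 1))⁻¹ := by positivity
    calc |x| ^ k * ((Real.sqrt (2 * Real.pi * 1))⁻¹ * Real.exp (-(x - 0) ^ 2 / (2 * 1)))
        = (Real.sqrt (2 * Real.pi * 1))⁻¹ * (|x| ^ k * Real.exp (-(x - 0) ^ 2 / (2 * 1))) := by ring
      _ ≤ (Real.sqrt (2 * Real.pi * 1))⁻¹ * ((k.factorial * Real.exp 1) * Real.exp (-(1/4) * x ^ 2)) := by
          gcongr
      _ = ((Real.sqrt (2 * Real.pi * 1))⁻¹ * (k.factorial * Real.exp 1)) * Real.exp (-(1/4) * x ^ 2) := by ring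
  refine Integrable.mono' ((integrable_exp_neg_mul_sq (by norm_num : (0:ℝ) < 1/4)).const_mul _)
    ?_ (Eventually.of_forall hbound)
  exact ((continuous_abs.pow k).aestronglyMeasurable).mul
    ((measurable_gaussianPDF 0 1).ennreal_toReal.aestronglyMeasurable)

lemma stmt9_gauss_eq_map (v : NNReal) :
    gaussianReal 0 v = Measure.map (fun x => Real.sqrt v * x) (gaussianReal 0 1) := by
  have h := gaussianReal_map_const_mul (μ := 0) (v := 1) (Real.sqrt v)
  have h2 : (gaussianReal 0 1).map (fun x => Real.sqrt v * x) = gaussianReal (Real.sqrt v * 0)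
      (⟨(Real.sqrt v)^2, sq_nonneg _⟩ * 1) := h
  rw [h2]
  congr 1
  · simp
  · exact NNReal.eq (by show (v:ℝ) = (Real.sqrt v)^2 * 1; rw [mul_one, Real.sq_sqrt v.coe_nonneg])

lemma stmt9_integrable_abs_pow (k : ℕ) (v : NNReal) :
    Integrable (fun x : ℝ => |x| ^ k) (gaussianReal 0 v) := by
  rw [stmt9_gauss_eq_map v,
    integrable_map_measure (g := fun x : ℝ => |x| ^ k) ((continuous_abs.pow k).aestronglyMeasurable)
      ((measurable_const_mul _).aemeasurable)]
  have heq : ((fun x : ℝ => |x| ^ k) ∘ (fun x => Real.sqrt v * x)) =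
      fun x => (Real.sqrt (v:ℝ)) ^ k * |x| ^ k := by
    funext x
    simp only [Function.comp_apply, abs_mul, mul_pow, abs_of_nonneg (Real.sqrt_nonneg (v:ℝ))]
  rw [heq]
  exact (stmt9_integrable_abs_pow_std k).const_mul _

lemma stmt9_moment_scale (k : ℕ) (v : NNReal) :
    ∫ x, |x| ^ k ∂(gaussianReal 0 v) =
      (Real.sqrt v) ^ k * ∫ x, |x| ^ k ∂(gaussianReal 0 1) := by
  rw [stmt9_gauss_eq_map v, integral_map (f := fun x : ℝ => |x| ^ k) ((measurable_const_mul _).aemeasurable)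
    ((continuous_abs.pow k).aestronglyMeasurable)]
  simp_rw [abs_mul, mul_pow, abs_of_nonneg (Real.sqrt_nonneg (v:ℝ))]
  exact MeasureTheory.integral_const_mul _ _

lemma stmt9_M2_pos : 0 < ∫ x, |x| ^ 2 ∂(gaussianReal 0 1) := by
  rw [integral_pos_iff_support_of_nonneg_ae (Eventually.of_forall fun x => by positivity)
    (stmt9_integrable_abs_pow_std 2)]
  have hsupp : Function.support (fun x : ℝ => |x| ^ 2) = {0}ᶜ := by
    ext x
    simp [Function.support, pow_eq_zero_iff, abs_eq_zero]
  rw [hsupp]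
  have h0 : (gaussianReal 0 1 : Measure ℝ) {0} = 0 :=
    (gaussianReal_absolutelyContinuous 0 one_ne_zero) Real.volume_singleton
  have huniv : (gaussianReal 0 1 : Measure ℝ) {0}ᶜ = 1 := by
    rw [measure_compl (measurableSet_singleton 0) (measure_ne_top _ _), h0, measure_univ]
    simp
  rw [huniv]
  norm_num

lemma stmt9_riemann (f : ℝ → ℝ) (hf : Continuous f) (s T : ℝ) (hsT : s < T) :
    Tendsto (fun n : ℕ => ∑ i : Fin (n+1), ((T - s)/(n+1)) * f (s + i * ((T - s)/(n+1))))
      atTop (𝓝 (∫ r in s..T, f r)) := by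
  have hTs : (0:ℝ) < T - s := sub_pos.2 hsT
  rw [Metric.tendsto_atTop]
  intro ε hε
  -- uniform continuity on [s,T]
  obtain ⟨δ, hδ, hδ'⟩ := Metric.uniformContinuousOn_iff.1
    (isCompact_Icc.uniformContinuousOn_of_continuous (s := Set.Icc s T) hf.continuousOn)
    (ε / (2 * (T - s))) (by positivity)
  obtain ⟨N, hN⟩ := exists_nat_gt ((T - s) / δ)
  refine ⟨N, fun n hn => ?_⟩
  set Δ : ℝ := (T - s)/(n+1) with hΔdef
  have hΔpos : 0 < Δ := by positivity
  have hΔδ : Δ < δ := by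
    rw [hΔdef, div_lt_iff₀ (by positivity)]
    have h1 : (T - s) / δ < n + 1 := lt_of_lt_of_le hN (by exact_mod_cast Nat.le_succ_of_le hn)
    calc T - s = ((T - s)/δ) * δ := by field_simp
      _ < (n+1) * δ := by gcongr
      _ = δ * (n+1) := mul_comm _ _
  set t : ℕ → ℝ := fun i => s + i * Δ with htdef
  have ht0 : t 0 = s := by simp [htdef]
  have htlast : t (n+1) = T := by
    simp only [htdef, hΔdef]
    push_cast
    field_simp
    ring
  have htmem : ∀ i ≤ n + 1, t i ∈ Set.Icc s T := by
    intro i hi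
    constructor
    · simp only [htdef]
      nlinarith [Nat.cast_nonneg (α := ℝ) i, hΔpos]
    · simp only [htdef]
      have : (i:ℝ) * Δ ≤ (n+1) * Δ := by
        gcongr
        exact_mod_cast hi
      have h2 : ((n:ℝ)+1) * Δ = T - s := by
        rw [hΔdef]; field_simp
      linarith
  have hint : ∀ k < n + 1, IntervalIntegrable f volume (t k) (t (k+1)) :=
    fun k _ => hf.intervalIntegrable _ _
  have hsplit : ∫ r in s..T, f r = ∑ k ∈ Finset.range (n+1), ∫ r in t k..t (k+1), f r := by
    rw [sum_integral_adjacent_intervals hint, ht0, htlast]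
  have hstep : ∀ i ∈ Finset.range (n+1),
      ‖Δ * f (t i) - ∫ r in t i..t (i+1), f r‖ ≤ (ε / (2 * (T - s))) * Δ := by
    intro i hi
    rw [Finset.mem_range] at hi
    have hconst : Δ * f (t i) = ∫ _ in t i..t (i+1), f (t i) := by
      rw [intervalIntegral.integral_const, smul_eq_mul]
      congr 1
      simp only [htdef]
      push_cast
      ring
    rw [hconst, ← intervalIntegral.integral_sub ((continuous_const (y := f (t i))).intervalIntegrable _ _)
      (hf.intervalIntegrable _ _)]
    have hbd : ∀ x ∈ Set.uIoc (t i) (t (i+1)), ‖f (t i) - f x‖ ≤ ε / (2 * (T - s)) := by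
      intro x hx
      have hii : t i ≤ t (i+1) := by
        simp only [htdef]
        push_cast
        nlinarith [hΔpos]
      rw [Set.uIoc_of_le hii] at hx
      have hxm : x ∈ Set.Icc s T := by
        constructor
        · exact le_trans (htmem i (by omega) |>.1) (le_of_lt hx.1)
        · exact le_trans hx.2 (htmem (i+1) (by omega) |>.2)
      have hdist : dist (t i) x < δ := by
        rw [Real.dist_eq, abs_sub_comm, abs_of_nonneg (by linarith [hx.1.le] : 0 ≤ x - t i)]
        have : x ≤ t i + Δ := by
          have : t (i+1) = t i + Δ := by simp only [htdef]; push_cast; ring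
          linarith [hx.2, this.symm.le]
        linarith
      have := hδ' (t i) (htmem i (by omega)) x hxm hdist
      rw [Real.dist_eq] at this
      exact le_of_lt (by rwa [Real.norm_eq_abs])
    have := intervalIntegral.norm_integral_le_of_norm_le_const hbd
    have habs : |t (i+1) - t i| = Δ := by
      have : t (i+1) - t i = Δ := by simp only [htdef]; push_cast; ring
      rw [this, abs_of_pos hΔpos]
    rwa [habs] at this
  have hsum : dist (∑ i : Fin (n+1), Δ * f (t i)) (∫ r in s..T, f r) ≤ ε / 2 := by
    rw [Fin.sum_univ_eq_sum_range (fun i => Δ * f (t i)), hsplit, dist_eq_norm,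
      ← Finset.sum_sub_distrib]
    calc ‖∑ i ∈ Finset.range (n+1), (Δ * f (t i) - ∫ r in t i..t (i+1), f r)‖
        ≤ ∑ i ∈ Finset.range (n+1), ‖Δ * f (t i) - ∫ r in t i..t (i+1), f r‖ :=
          norm_sum_le _ _
      _ ≤ ∑ _i ∈ Finset.range (n+1), (ε / (2 * (T - s))) * Δ := Finset.sum_le_sum hstep
      _ = (n+1) * ((ε / (2 * (T - s))) * Δ) := by
          rw [Finset.sum_const, Finset.card_range]
          push_cast
          ring
      _ = ε / 2 := by
          rw [hΔdef]
          field_simp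
  calc dist (∑ i : Fin (n+1), Δ * f (s + i * Δ)) (∫ r in s..T, f r) ≤ ε/2 := hsum
    _ < ε := by linarith

lemma stmt9_row_bound {c : ℝ} (hc : 0 < c) (m i : ℕ) :
    ∑ j ∈ Finset.range m, Real.exp (-(c * |(i:ℝ) - (j:ℝ)|)) ≤ 1 + 2 / c := by
  set q := Real.exp (-c) with hq
  have hq0 : 0 < q := Real.exp_pos _
  have hq1 : q < 1 := Real.exp_lt_one_iff.2 (by linarith)
  have h1q : 0 < 1 - q := by linarith
  have hkey : (c + 1) * q ≤ 1 := by
    have h := Real.add_one_le_exp c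
    have : (c + 1) * q ≤ Real.exp c * q := mul_le_mul_of_nonneg_right h hq0.le
    rw [hq, ← Real.exp_add] at this
    simpa using this
  have hgeom : ∀ N : ℕ, ∑ k ∈ Finset.range N, q ^ k ≤ (1 - q)⁻¹ := by
    intro N
    have := Summable.sum_le_tsum (Finset.range N) (fun k _ => by positivity)
      (summable_geometric_of_lt_one hq0.le hq1)
    rwa [tsum_geometric_of_lt_one hq0.le hq1] at this
  have hA : (1 - q)⁻¹ ≤ 1 + 1/c := by
    rw [inv_le_iff_one_le_mul₀ h1q]
    have : (1 + 1/c) * (1 - q) - 1 = (1 - (c+1)*q) / c := by field_simp; ring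
    nlinarith [div_nonneg (by linarith : (0:ℝ) ≤ 1 - (c+1)*q) hc.le]
  have hB : q * (1 - q)⁻¹ ≤ 1/c := by
    rw [mul_inv_le_iff₀ h1q, div_mul_eq_mul_div, le_div_iff₀ hc]
    nlinarith
  rw [← Finset.sum_filter_add_sum_filter_not (Finset.range m) (fun j => j ≤ i)]
  have hfilter1 : Finset.filter (fun j => j ≤ i) (Finset.range m) ⊆ Finset.range (i+1) := by
    intro j hj
    simp only [Finset.mem_filter, Finset.mem_range] at hj ⊢
    omega
  have hterm1 : ∀ j ∈ Finset.filter (fun j => j ≤ i) (Finset.range m),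
      Real.exp (-(c * |(i:ℝ) - (j:ℝ)|)) = q ^ (i - j) := by
    intro j hj
    simp only [Finset.mem_filter] at hj
    have hji : j ≤ i := hj.2
    have habs : |(i:ℝ) - (j:ℝ)| = ((i - j : ℕ) : ℝ) := by
      rw [abs_of_nonneg (sub_nonneg.2 (by exact_mod_cast hji))]
      push_cast [Nat.cast_sub hji]
      ring
    rw [habs, show -(c * ((i - j : ℕ):ℝ)) = ((i - j : ℕ):ℝ) * (-c) by ring,
      Real.exp_nat_mul]
  have hsum1 : ∑ j ∈ Finset.filter (fun j => j ≤ i) (Finset.range m),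
      Real.exp (-(c * |(i:ℝ) - (j:ℝ)|)) ≤ (1 - q)⁻¹ := by
    rw [Finset.sum_congr rfl hterm1]
    calc ∑ j ∈ Finset.filter (fun j => j ≤ i) (Finset.range m), q ^ (i - j)
        ≤ ∑ j ∈ Finset.range (i+1), q ^ (i - j) :=
          Finset.sum_le_sum_of_subset_of_nonneg hfilter1 (fun k _ _ => by positivity)
      _ = ∑ j ∈ Finset.range (i+1), q ^ j := by
          have := Finset.sum_range_reflect (fun k => q ^ k) (i+1)
          simpa using this
      _ ≤ (1 - q)⁻¹ := hgeom _
  have hfilter2 : Finset.filter (fun j => ¬ j ≤ i) (Finset.range m) = Finset.Ico (i+1) m := by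
    ext j
    simp only [Finset.mem_filter, Finset.mem_range, Finset.mem_Ico]
    omega
  have hsum2 : ∑ j ∈ Finset.filter (fun j => ¬ j ≤ i) (Finset.range m),
      Real.exp (-(c * |(i:ℝ) - (j:ℝ)|)) ≤ q * (1 - q)⁻¹ := by
    rw [hfilter2, Finset.sum_Ico_eq_sum_range]
    have hterm2 : ∀ k, Real.exp (-(c * |(i:ℝ) - ((i + 1 + k : ℕ):ℝ)|)) = q ^ (k + 1) := by
      intro k
      have habs : |(i:ℝ) - ((i + 1 + k : ℕ):ℝ)| = ((k + 1 : ℕ):ℝ) := by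
        push_cast
        rw [abs_of_nonpos (by linarith)]
        ring
      rw [habs, show -(c * ((k + 1 : ℕ):ℝ)) = ((k + 1 : ℕ):ℝ) * (-c) by ring,
        Real.exp_nat_mul]
    calc ∑ k ∈ Finset.range (m - (i+1)), Real.exp (-(c * |(i:ℝ) - ((i + 1 + k : ℕ):ℝ)|))
        = ∑ k ∈ Finset.range (m - (i+1)), q * q ^ k := by
          refine Finset.sum_congr rfl fun k _ => ?_
          rw [hterm2 k, pow_succ]
          ring
      _ = q * ∑ k ∈ Finset.range (m - (i+1)), q ^ k := by rw [Finset.mul_sum]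
      _ ≤ q * (1 - q)⁻¹ := by
          gcongr
          exact hgeom _
  calc ∑ j ∈ Finset.filter (fun j => j ≤ i) (Finset.range m),
        Real.exp (-(c * |(i:ℝ) - (j:ℝ)|)) +
      ∑ j ∈ Finset.filter (fun j => ¬ j ≤ i) (Finset.range m),
        Real.exp (-(c * |(i:ℝ) - (j:ℝ)|))
      ≤ (1 - q)⁻¹ + q * (1 - q)⁻¹ := add_le_add hsum1 hsum2
    _ ≤ (1 + 1/c) + 1/c := add_le_add hA hB
    _ = 1 + 2/c := by ring

/-- averaging estimate for the stationary Ornstein–Uhlenbeck process.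
If `Z` is a continuous centered stationary Gaussian process with marginal law
`N(0, α²/(2λ))` and covariance `E[Z_t Z_s] = (α²/(2λ)) e^{−λ|t−s|/ε²}`, then for every
`p ≥ 1` there is `C > 0` (independent of `ε`) such that
`E |∫_s^T Z_r dr|^{2p} ≤ C (T−s)^p ε^{2p}` for all `0 ≤ s < T`. -/
theorem stmt9 {Ω : Type*} [MeasurableSpace Ω] (P : Measure Ω) [IsProbabilityMeasure P]
    (lam α : ℝ) (hlam : 0 < lam) (p : ℕ) (hp : 1 ≤ p) :
    ∃ C > (0:ℝ), ∀ ε > (0:ℝ), ∀ Z : ℝ → Ω → ℝ,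
      (∀ ω, Continuous fun t => Z t ω) →
      (∀ t, Measure.map (Z t) P = gaussianReal 0 (α ^ 2 / (2 * lam)).toNNReal) →
      (∀ t s, (∫ ω, Z t ω * Z s ω ∂P) = α ^ 2 / (2 * lam) * Real.exp (-lam * |t - s| / ε ^ 2)) →
      (∀ (n : ℕ) (ts : Fin n → ℝ) (c : Fin n → ℝ), ∃ vr : NNReal,
        Measure.map (fun ω => ∑ i, c i * Z (ts i) ω) P = gaussianReal 0 vr) →
      ∀ s T : ℝ, 0 ≤ s → s < T →
        (∫ ω, |∫ r in s..T, Z r ω| ^ (2 * p) ∂P) ≤ C * (T - s) ^ p * ε ^ (2 * p) := by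
  set M2p := ∫ x, |x| ^ (2*p) ∂(gaussianReal 0 1) with hM2pdef
  set M2 := ∫ x, |x| ^ 2 ∂(gaussianReal 0 1) with hM2def
  have hM2 : 0 < M2 := stmt9_M2_pos
  have hM2p : 0 ≤ M2p := integral_nonneg fun x => by positivity
  set coeff : ℝ := M2p * ((2 * α^2 / lam^2) / M2)^p with hcoeffdef
  have hcoeff0 : 0 ≤ coeff :=
    mul_nonneg hM2p (pow_nonneg (div_nonneg (by positivity) hM2.le) p)
  refine ⟨coeff + 1, by linarith, ?_⟩
  intro ε hε Z hZcont hZlaw hZcov hZgauss s T hs hsT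
  have hTs : (0:ℝ) < T - s := sub_pos.2 hsT
  set K : ℝ := α ^ 2 / (2 * lam) with hKdef
  have hK0 : 0 ≤ K := by positivity
  set S : ℕ → Ω → ℝ :=
    fun n ω => ∑ i : Fin (n+1), ((T - s)/(n+1)) * Z (s + i * ((T - s)/(n+1))) ω with hSdef
  have hvr : ∀ n : ℕ, ∃ v : NNReal, Measure.map (S n) P = gaussianReal 0 v := fun n =>
    hZgauss (n+1) (fun i => s + i * ((T - s)/(n+1))) (fun _ => (T - s)/(n+1))
  choose vr hvrspec using hvr
  have hSmeas : ∀ n, AEMeasurable (S n) P := fun n =>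
    aemeasurable_of_map_neZero (by rw [hvrspec n]; infer_instance)
  have hZmeas : ∀ t, AEMeasurable (Z t) P := fun t =>
    aemeasurable_of_map_neZero (by rw [hZlaw t]; infer_instance)
  -- integrability of products
  have hprod : ∀ t u : ℝ, Integrable (fun ω => Z t ω * Z u ω) P := by
    intro t u
    by_cases hα : α = 0
    · have hzero : ∀ᵐ ω ∂P, Z t ω = 0 := by
        have hv : (α ^ 2 / (2 * lam)).toNNReal = 0 := by simp [hα]
        have hd : Measure.map (Z t) P = Measure.dirac 0 := by
          rw [hZlaw t, hv, gaussianReal_zero_var]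
        have hkey : P (Z t ⁻¹' {(0:ℝ)}ᶜ) = 0 := by
          rw [← Measure.map_apply_of_aemeasurable (hZmeas t)
            (measurableSet_singleton (0:ℝ)).compl, hd,
            Measure.dirac_apply' _ (measurableSet_singleton (0:ℝ)).compl]
          simp
        rw [ae_iff]
        have hset : {ω | ¬ Z t ω = 0} = Z t ⁻¹' {(0:ℝ)}ᶜ := by
          ext ω; simp
        rw [hset]
        exact hkey
      have heq : (fun ω => Z t ω * Z u ω) =ᵐ[P] (fun _ => 0) := by
        filter_upwards [hzero] with ω hω
        simp [hω]
      exact (integrable_zero _ _ _).congr heq.symm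
    · have hne : α ^ 2 / (2 * lam) * Real.exp (-lam * |t - u| / ε ^ 2) ≠ 0 := by positivity
      by_contra hni
      have hcv := hZcov t u
      rw [integral_undef hni] at hcv
      exact hne hcv.symm
  -- per-n second moment computation and bound
  have hE2 : ∀ n : ℕ, ∫ ω, (S n ω)^2 ∂P =
      ∑ i : Fin (n+1), ∑ j : Fin (n+1), ((T - s)/(n+1))^2 *
        (K * Real.exp (-lam * |(s + i * ((T - s)/(n+1))) - (s + j * ((T - s)/(n+1)))| / ε ^ 2)) := by
    intro n
    set Δ : ℝ := (T - s)/(n+1) with hΔdef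
    have hexpand : (fun ω => (S n ω)^2) = fun ω =>
        ∑ i : Fin (n+1), ∑ j : Fin (n+1), Δ^2 * (Z (s + i * Δ) ω * Z (s + j * Δ) ω) := by
      funext ω
      rw [hSdef]
      simp only
      rw [sq, Finset.sum_mul_sum]
      refine Finset.sum_congr rfl fun i _ => Finset.sum_congr rfl fun j _ => by ring
    rw [hexpand]
    rw [integral_finset_sum _ (fun i _ => integrable_finset_sum _ (fun j _ =>
      ((hprod _ _).const_mul _)))]
    refine Finset.sum_congr rfl fun i _ => ?_
    rw [integral_finset_sum _ (fun j _ => ((hprod _ _).const_mul _))]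
    refine Finset.sum_congr rfl fun j _ => ?_
    rw [MeasureTheory.integral_const_mul, hZcov]
  have hE2bound : ∀ n : ℕ, ∫ ω, (S n ω)^2 ∂P ≤
      K * (T - s) * ((T - s)/(n+1) + 2*ε^2/lam) := by
    intro n
    rw [hE2 n]
    set Δ : ℝ := (T - s)/(n+1) with hΔdef
    have hΔpos : 0 < Δ := by positivity
    set c : ℝ := lam * Δ / ε^2 with hcdef
    have hc : 0 < c := by positivity
    have hrow : ∀ i : Fin (n+1),
        ∑ j : Fin (n+1), Δ^2 * (K * Real.exp (-lam * |(s + i * Δ) - (s + j * Δ)| / ε ^ 2))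
          ≤ Δ^2 * K * (1 + 2/c) := by
      intro i
      have hterm : ∀ j : Fin (n+1),
          Real.exp (-lam * |(s + i * Δ) - (s + j * Δ)| / ε ^ 2)
            = Real.exp (-(c * |(i:ℝ) - (j:ℝ)|)) := by
        intro j
        congr 1
        have habs : |(s + i * Δ) - (s + j * Δ)| = |(i:ℝ) - (j:ℝ)| * Δ := by
          rw [show (s + i * Δ) - (s + j * Δ) = ((i:ℝ) - (j:ℝ)) * Δ by ring,
            abs_mul, abs_of_pos hΔpos]
        rw [habs, hcdef]
        field_simp
      calc ∑ j : Fin (n+1), Δ^2 * (K * Real.exp (-lam * |(s + i * Δ) - (s + j * Δ)| / ε ^ 2))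
          = Δ^2 * K * ∑ j : Fin (n+1), Real.exp (-(c * |(i:ℝ) - (j:ℝ)|)) := by
            rw [Finset.mul_sum]
            exact Finset.sum_congr rfl fun j _ => by rw [hterm j]; ring
        _ ≤ Δ^2 * K * (1 + 2/c) := by
            have hb : ∑ j : Fin (n+1), Real.exp (-(c * |(i:ℝ) - (j:ℝ)|)) ≤ 1 + 2/c := by
              rw [Fin.sum_univ_eq_sum_range (fun j : ℕ => Real.exp (-(c * |(i:ℝ) - (j:ℝ)|)))]
              exact stmt9_row_bound hc (n+1) i
            have : (0:ℝ) ≤ Δ^2 * K := by positivity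
            exact mul_le_mul_of_nonneg_left hb this
    calc ∑ i : Fin (n+1), ∑ j : Fin (n+1), Δ^2 *
          (K * Real.exp (-lam * |(s + i * Δ) - (s + j * Δ)| / ε ^ 2))
        ≤ ∑ _i : Fin (n+1), Δ^2 * K * (1 + 2/c) := Finset.sum_le_sum fun i _ => hrow i
      _ = (n+1 : ℝ) * (Δ^2 * K * (1 + 2/c)) := by
          rw [Finset.sum_const, Finset.card_univ, Fintype.card_fin]
          push_cast
          ring
      _ = K * (T - s) * (Δ + 2*ε^2/lam) := by
          have hnn : ((n:ℝ)+1) * Δ = T - s := by rw [hΔdef]; field_simp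
          have h1 : Δ * (2/c) = 2*ε^2/lam := by
            rw [hcdef]
            field_simp
          calc ((n:ℝ)+1) * (Δ^2 * K * (1 + 2/c)) = K * (((n:ℝ)+1) * Δ) * (Δ + Δ * (2/c)) := by
                ring
            _ = K * (T - s) * (Δ + 2*ε^2/lam) := by rw [hnn, h1]
  -- link vr with second moment, and the 2p moment
  have hvar : ∀ n : ℕ, (vr n : ℝ) * M2 = ∫ ω, (S n ω)^2 ∂P := by
    intro n
    have h1 : ∫ x, |x|^2 ∂(gaussianReal 0 (vr n)) = ∫ ω, |S n ω|^2 ∂P := by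
      rw [← hvrspec n, integral_map (f := fun x : ℝ => |x| ^ 2) (hSmeas n) ((continuous_abs.pow 2).aestronglyMeasurable)]
    rw [stmt9_moment_scale 2 (vr n), Real.sq_sqrt (vr n).coe_nonneg] at h1
    rw [← hM2def] at h1
    rw [h1]
    exact integral_congr_ae (.of_forall fun ω => by simp [sq_abs])
  have hmom : ∀ n : ℕ, ∫ ω, |S n ω|^(2*p) ∂P = ((vr n : ℝ))^p * M2p := by
    intro n
    have h1 : ∫ x, |x|^(2*p) ∂(gaussianReal 0 (vr n)) = ∫ ω, |S n ω|^(2*p) ∂P := by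
      rw [← hvrspec n, integral_map (f := fun x : ℝ => |x| ^ (2*p)) (hSmeas n) ((continuous_abs.pow (2*p)).aestronglyMeasurable)]
    rw [stmt9_moment_scale (2*p) (vr n), ← hM2pdef] at h1
    rw [← h1, pow_mul, Real.sq_sqrt (vr n).coe_nonneg]
  have hSint : ∀ n : ℕ, Integrable (fun ω => |S n ω|^(2*p)) P := by
    intro n
    have h := stmt9_integrable_abs_pow (2*p) (vr n)
    rw [← hvrspec n, integrable_map_measure (g := fun x : ℝ => |x| ^ (2*p)) ((continuous_abs.pow (2*p)).aestronglyMeasurable)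
      (hSmeas n)] at h
    exact h
  -- eventual bound
  set B : ℝ := coeff * ((T - s)^p * ε^(2*p)) with hBdef
  have hev : ∀ᶠ n : ℕ in atTop, (T - s)/((n:ℝ)+1) ≤ 2*ε^2/lam := by
    have h1 : Tendsto (fun n : ℕ => (T - s) * (1/((n:ℝ)+1))) atTop (𝓝 ((T - s) * 0)) :=
      tendsto_one_div_add_atTop_nhds_zero_nat.const_mul (T - s)
    rw [mul_zero] at h1
    have h2 := h1.eventually_lt_const (show (0:ℝ) < 2*ε^2/lam by positivity)
    filter_upwards [h2] with n hn
    rw [mul_one_div] at hn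
    exact hn.le
  have hevbound : ∀ᶠ n : ℕ in atTop, ∫ ω, |S n ω|^(2*p) ∂P ≤ B := by
    filter_upwards [hev] with n hn
    have hvb : (vr n : ℝ) ≤ (2 * α^2 / lam^2) * ((T - s) * ε^2) / M2 := by
      rw [le_div_iff₀ hM2]
      calc (vr n : ℝ) * M2 = ∫ ω, (S n ω)^2 ∂P := hvar n
        _ ≤ K * (T - s) * ((T - s)/(n+1) + 2*ε^2/lam) := hE2bound n
        _ ≤ K * (T - s) * (2*ε^2/lam + 2*ε^2/lam) := by gcongr
        _ = (2 * α^2 / lam^2) * ((T - s) * ε^2) := by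
            rw [hKdef]
            field_simp
            ring
    calc ∫ ω, |S n ω|^(2*p) ∂P = ((vr n : ℝ))^p * M2p := hmom n
      _ ≤ ((2 * α^2 / lam^2) * ((T - s) * ε^2) / M2)^p * M2p := by
          gcongr
      _ = B := by
          rw [hBdef, hcoeffdef]
          rw [show (2 * α^2 / lam^2) * ((T - s) * ε^2) / M2
              = ((2 * α^2 / lam^2) / M2) * ((T - s) * ε^2) by ring]
          rw [mul_pow, mul_pow, ← pow_mul]
          ring
  -- Fatou
  set X : Ω → ℝ := fun ω => ∫ r in s..T, Z r ω with hXdef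
  have hXtend : ∀ ω, Tendsto (fun n => S n ω) atTop (𝓝 (X ω)) := fun ω =>
    stmt9_riemann (fun t => Z t ω) (hZcont ω) s T hsT
  have hXmeas : AEMeasurable X P :=
    aemeasurable_of_tendsto_metrizable_ae' hSmeas (.of_forall hXtend)
  have hg : Measurable (fun x : ℝ => ENNReal.ofReal (|x|^(2*p))) :=
    (ENNReal.continuous_ofReal.comp (continuous_abs.pow (2*p))).measurable
  have hliminf : ∫⁻ ω, ENNReal.ofReal (|X ω|^(2*p)) ∂P ≤
      liminf (fun n => ∫⁻ ω, ENNReal.ofReal (|S n ω|^(2*p)) ∂P) atTop := by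
    have h1 := lintegral_liminf_le' (μ := P) (u := atTop)
      (f := fun n ω => ENNReal.ofReal (|S n ω|^(2*p)))
      (fun n => hg.comp_aemeasurable (hSmeas n))
    have h2 : ∀ ω, liminf (fun n => ENNReal.ofReal (|S n ω|^(2*p))) atTop
        = ENNReal.ofReal (|X ω|^(2*p)) := by
      intro ω
      have : Tendsto (fun n => ENNReal.ofReal (|S n ω|^(2*p))) atTop
          (𝓝 (ENNReal.ofReal (|X ω|^(2*p)))) :=
        (ENNReal.continuous_ofReal.tendsto _).comp (((hXtend ω).abs).pow (2*p))
      exact this.liminf_eq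
    calc ∫⁻ ω, ENNReal.ofReal (|X ω|^(2*p)) ∂P
        = ∫⁻ ω, liminf (fun n => ENNReal.ofReal (|S n ω|^(2*p))) atTop ∂P :=
          lintegral_congr fun ω => (h2 ω).symm
      _ ≤ liminf (fun n => ∫⁻ ω, ENNReal.ofReal (|S n ω|^(2*p)) ∂P) atTop := h1
  have hB0 : 0 ≤ B := by
    rw [hBdef]
    positivity
  have hlim_le : liminf (fun n => ∫⁻ ω, ENNReal.ofReal (|S n ω|^(2*p)) ∂P) atTop
      ≤ ENNReal.ofReal B := by
    refine liminf_le_of_frequently_le' ?_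
    refine (hevbound.mono fun n hn => ?_).frequently
    rw [← ofReal_integral_eq_lintegral_ofReal (hSint n)
      (.of_forall fun ω => by positivity)]
    exact ENNReal.ofReal_le_ofReal hn
  have hXsm : AEStronglyMeasurable (fun ω => |X ω|^(2*p)) P :=
    ((continuous_abs.pow (2*p)).measurable.comp_aemeasurable hXmeas).aestronglyMeasurable
  rw [show (∫ ω, |∫ r in s..T, Z r ω| ^ (2 * p) ∂P) = ∫ ω, |X ω|^(2*p) ∂P from rfl]
  rw [integral_eq_lintegral_of_nonneg_ae (.of_forall fun ω => by positivity) hXsm]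
  have hfin : ∫⁻ ω, ENNReal.ofReal (|X ω|^(2*p)) ∂P ≤ ENNReal.ofReal B :=
    hliminf.trans hlim_le
  calc (∫⁻ ω, ENNReal.ofReal (|X ω|^(2*p)) ∂P).toReal
      ≤ (ENNReal.ofReal B).toReal := ENNReal.toReal_mono ENNReal.ofReal_ne_top hfin
    _ = B := ENNReal.toReal_ofReal hB0
    _ ≤ (coeff + 1) * (T - s)^p * ε^(2*p) := by
        rw [hBdef]
        nlinarith [hcoeff0, pow_nonneg hTs.le p, pow_nonneg (le_of_lt (pow_pos hε (2*p))) 1,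
          mul_nonneg (pow_nonneg hTs.le p) (le_of_lt (pow_pos hε (2*p)))]
end
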